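/- Let α : ℝ → ℝ be defined by α(x) = arcsin((1-2x)/√5) + arcsin((1+2x)/√5) + 2·arctan(2) - π. Then (1/π)·∫_{-1/2}^{1/2} α(x) dx = (2/π)·(arctan(1/3) + arctan(2)) - (√5 - 1)/π - 1/2. -/

import Mathlib

open Real intervalIntegral

lemma aux_G {u : ℝ} (hu : -1 < u) (hu' : u < 1) :
    HasDerivAt (fun u : ℝ => u * Real.arcsin u + Real.sqrt (1 - u ^ 2)) (Real.arcsin u) u := by
  have hpos : 0 < 1 - u ^ 2 := by nlinarith
  have h1 : HasDerivAt Real.arcsin (1 / Real.sqrt (1 - u ^ 2)) u :=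
    Real.hasDerivAt_arcsin (by intro h; rw [h] at hu; linarith) (by intro h; rw [h] at hu'; linarith)
  have h2 : HasDerivAt (fun u : ℝ => 1 - u ^ 2) (-(2 * u)) u := by
    simpa using ((hasDerivAt_pow 2 u).const_sub 1)
  have h3 := h2.sqrt hpos.ne'
  have h4 := ((hasDerivAt_id u).mul h1).add h3
  have hs : 0 < Real.sqrt (1 - u ^ 2) := Real.sqrt_pos.mpr hpos
  refine h4.congr_deriv ?_
  simp only [id_eq]
  field_simp
  ring

noncomputable def Gfun (u : ℝ) : ℝ := u * Real.arcsin u + Real.sqrt (1 - u ^ 2)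

noncomputable def Ffun (x : ℝ) : ℝ :=
  Real.sqrt 5 / 2 * Gfun ((1 + 2 * x) / Real.sqrt 5)
    - Real.sqrt 5 / 2 * Gfun ((1 - 2 * x) / Real.sqrt 5)
    + (2 * Real.arctan 2 - Real.pi) * x

lemma h5pos : (0:ℝ) < Real.sqrt 5 := Real.sqrt_pos.mpr (by norm_num)

lemma h5lt : (2:ℝ) < Real.sqrt 5 := by
  nlinarith [Real.sq_sqrt (by norm_num : (0:ℝ) ≤ 5), Real.sqrt_nonneg 5]

lemma hF {x : ℝ} (hx1 : -(1:ℝ)/2 ≤ x) (hx2 : x ≤ 1/2) :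
    HasDerivAt Ffun (Real.arcsin ((1 - 2*x) / Real.sqrt 5)
      + Real.arcsin ((1 + 2*x) / Real.sqrt 5) + 2 * Real.arctan 2 - Real.pi) x := by
  have h5 := h5pos
  have h25 := h5lt
  have hu1a : -1 < (1 + 2 * x) / Real.sqrt 5 := by
    rw [lt_div_iff₀ h5]; nlinarith
  have hu1b : (1 + 2 * x) / Real.sqrt 5 < 1 := by
    rw [div_lt_one h5]; nlinarith
  have hu2a : -1 < (1 - 2 * x) / Real.sqrt 5 := by
    rw [lt_div_iff₀ h5]; nlinarith
  have hu2b : (1 - 2 * x) / Real.sqrt 5 < 1 := by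
    rw [div_lt_one h5]; nlinarith
  have hA : HasDerivAt (fun x : ℝ => (1 + 2 * x) / Real.sqrt 5) (2 / Real.sqrt 5) x := by
    simpa using (((hasDerivAt_id x).const_mul 2).const_add 1).div_const (Real.sqrt 5)
  have hB : HasDerivAt (fun x : ℝ => (1 - 2 * x) / Real.sqrt 5) (-2 / Real.sqrt 5) x := by
    have := (((hasDerivAt_id x).const_mul 2).const_sub 1).div_const (Real.sqrt 5)
    simpa [neg_div] using this
  have g1 := ((aux_G hu1a hu1b).comp x hA).const_mul (Real.sqrt 5 / 2)
  have g2 := ((aux_G hu2a hu2b).comp x hB).const_mul (Real.sqrt 5 / 2)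
  have g3 := (hasDerivAt_id x).const_mul (2 * Real.arctan 2 - Real.pi)
  have h := (g1.sub g2).add g3
  have hfe : (fun x => Real.sqrt 5 / 2 * ((fun u => u * Real.arcsin u + Real.sqrt (1 - u ^ 2)) ∘ fun x => (1 + 2 * x) / Real.sqrt 5) x -
          Real.sqrt 5 / 2 * ((fun u => u * Real.arcsin u + Real.sqrt (1 - u ^ 2)) ∘ fun x => (1 - 2 * x) / Real.sqrt 5) x +
        (2 * Real.arctan 2 - Real.pi) * id x) = Ffun := by
    funext y
    simp only [Ffun, Gfun, Function.comp, id]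
  refine HasDerivAt.congr_deriv (f := Ffun) h ?_
  field_simp
  ring

theorem probability_value (α : ℝ → ℝ)
    (hα : ∀ x, α x = Real.arcsin ((1 - 2*x) / Real.sqrt 5) + Real.arcsin ((1 + 2*x) / Real.sqrt 5)
        + 2 * Real.arctan 2 - Real.pi) :
    (1 / Real.pi) * ∫ x in (-(1:ℝ)/2)..(1/2), α x
      = (2 / Real.pi) * (Real.arctan (1/3) + Real.arctan 2) - (Real.sqrt 5 - 1) / Real.pi - 1/2 := by
  have h5 := h5pos
  have hαc : Continuous α := by
    have : α = fun x => Real.arcsin ((1 - 2*x) / Real.sqrt 5)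
        + Real.arcsin ((1 + 2*x) / Real.sqrt 5) + 2 * Real.arctan 2 - Real.pi := funext hα
    rw [this]
    exact (((Real.continuous_arcsin.comp (by continuity)).add
      (Real.continuous_arcsin.comp (by continuity))).add continuous_const).sub continuous_const
  have hderiv : ∀ x ∈ Set.uIcc (-(1:ℝ)/2) (1/2), HasDerivAt Ffun (α x) x := by
    intro x hx
    rw [Set.uIcc_of_le (by norm_num)] at hx
    rw [hα x]
    exact hF hx.1 hx.2
  have hint := intervalIntegral.integral_eq_sub_of_hasDerivAt hderiv
    (hαc.intervalIntegrable _ _)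
  rw [hint]
  have harc : Real.arcsin (2 / Real.sqrt 5) = Real.arctan 2 := by
    rw [Real.arctan_eq_arcsin]; norm_num
  have hsq : ((2:ℝ) / Real.sqrt 5) ^ 2 = 4 / 5 := by
    rw [div_pow, Real.sq_sqrt] <;> norm_num
  have hG0 : Gfun 0 = 1 := by simp [Gfun]
  have hG2 : Gfun (2 / Real.sqrt 5) = 2 / Real.sqrt 5 * Real.arctan 2 + 1 / Real.sqrt 5 := by
    unfold Gfun
    rw [harc, hsq]
    congr 1
    rw [show (1:ℝ) - 4/5 = (5:ℝ)⁻¹ by norm_num, Real.sqrt_inv, one_div]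
  have eb : Ffun (1/2) = Real.sqrt 5 / 2 * (2 / Real.sqrt 5 * Real.arctan 2 + 1 / Real.sqrt 5)
      - Real.sqrt 5 / 2 + (2 * Real.arctan 2 - Real.pi) * (1/2) := by
    simp only [Ffun]
    norm_num [hG0, hG2]
  have ea : Ffun (-(1:ℝ)/2) = Real.sqrt 5 / 2
      - Real.sqrt 5 / 2 * (2 / Real.sqrt 5 * Real.arctan 2 + 1 / Real.sqrt 5)
      + (2 * Real.arctan 2 - Real.pi) * (-(1:ℝ)/2) := by
    simp only [Ffun]
    norm_num [hG0, hG2]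
  have hval : Ffun (1/2) - Ffun (-(1:ℝ)/2)
      = 4 * Real.arctan 2 + 1 - Real.sqrt 5 - Real.pi := by
    rw [eb, ea]; field_simp; ring
  have hatan : Real.arctan 2 = Real.arctan (1/3) + Real.pi / 4 := by
    have h := Real.arctan_add (x := (1:ℝ)/3) (y := 1) (by norm_num)
    rw [Real.arctan_one] at h
    norm_num at h
    linarith
  rw [hval, hatan]
  have hπ : Real.pi ≠ 0 := Real.pi_ne_zero
  field_simp
  ring
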